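/- Let A_0, …, A_n be real numbers with ∑_i A_i = 0 and let M_0, …, M_n be strictly positive reals. Fix coordinate indices μ, ν ∈ {1,2,3,4}. Then the function q ↦ q_μ q_ν ∑_i A_i / (‖q‖² + M_i²)³ is Lebesgue integrable on ℝ⁴ and ∫_{ℝ⁴} q_μ q_ν ∑_i A_i / (‖q‖² + M_i²)³ dq = -(π²/4) δ_{μν} ∑_i A_i log(M_i²), where δ_{μν} = 1 if μ = ν and 0 otherwise. -/

import Mathlib

open MeasureTheory Real Filter Set Topology

lemma pv_diff_bound (a : ℝ) (ha : 0 < a) :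
    ∃ C : ℝ, 0 ≤ C ∧ ∀ x : ℝ, 0 ≤ x →
      |1 / (x + a) ^ 3 - 1 / (x + 1) ^ 3| ≤ C / (1 + x) ^ 4 := by
  set k : ℝ := min a 1 with hk
  set K : ℝ := max a 1 with hK
  have hk0 : 0 < k := lt_min ha one_pos
  have hk1 : k ≤ 1 := min_le_right _ _
  have hka : k ≤ a := min_le_left _ _
  have hK1 : 1 ≤ K := le_max_right _ _
  have hKa : a ≤ K := le_max_left _ _
  refine ⟨3 * |1 - a| * K ^ 2 / k ^ 6, by positivity, fun x hx => ?_⟩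
  have hxa : 0 < x + a := by linarith
  have hx1 : 0 < x + 1 := by linarith
  have hxk : 0 < x + k := by linarith
  have h1x : 0 < 1 + x := by linarith
  have key : 1 / (x + a) ^ 3 - 1 / (x + 1) ^ 3 =
      (1 - a) * ((x + 1) ^ 2 + (x + 1) * (x + a) + (x + a) ^ 2) /
        ((x + a) ^ 3 * (x + 1) ^ 3) := by
    field_simp
    ring
  rw [key, abs_div, abs_mul]
  have hP : 0 < (x + 1) ^ 2 + (x + 1) * (x + a) + (x + a) ^ 2 := by positivity
  have hD : 0 < (x + a) ^ 3 * (x + 1) ^ 3 := by positivity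
  rw [abs_of_pos hP, abs_of_pos hD]
  -- numerator bound
  have hnum : |1 - a| * ((x + 1) ^ 2 + (x + 1) * (x + a) + (x + a) ^ 2)
      ≤ |1 - a| * (3 * K ^ 2 * (1 + x) ^ 2) := by
    apply mul_le_mul_of_nonneg_left _ (abs_nonneg _)
    have h1 : x + 1 ≤ K * (1 + x) := by nlinarith
    have h2 : x + a ≤ K * (1 + x) := by nlinarith
    nlinarith [mul_le_mul h1 h2 hxa.le (by positivity : (0:ℝ) ≤ K * (1+x)),
      mul_le_mul h1 h1 hx1.le (by positivity : (0:ℝ) ≤ K * (1+x)),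
      mul_le_mul h2 h2 hxa.le (by positivity : (0:ℝ) ≤ K * (1+x))]
  have hden : k ^ 6 * (1 + x) ^ 6 ≤ (x + a) ^ 3 * (x + 1) ^ 3 := by
    have h1 : k * (1 + x) ≤ x + a := by nlinarith
    have h2 : k * (1 + x) ≤ x + 1 := by nlinarith
    calc k ^ 6 * (1 + x) ^ 6 = (k * (1 + x)) ^ 3 * (k * (1 + x)) ^ 3 := by ring
    _ ≤ (x + a) ^ 3 * (x + 1) ^ 3 := by
        apply mul_le_mul (pow_le_pow_left₀ (by positivity) h1 3)
          (pow_le_pow_left₀ (by positivity) h2 3) (by positivity) (by positivity)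
  calc |1 - a| * ((x + 1) ^ 2 + (x + 1) * (x + a) + (x + a) ^ 2) / ((x + a) ^ 3 * (x + 1) ^ 3)
      ≤ |1 - a| * (3 * K ^ 2 * (1 + x) ^ 2) / (k ^ 6 * (1 + x) ^ 6) :=
        div_le_div₀ (by positivity) hnum (by positivity) hden
    _ = 3 * |1 - a| * K ^ 2 / k ^ 6 / (1 + x) ^ 4 := by
        field_simp

lemma pv_norm_sq (q : EuclideanSpace ℝ (Fin 4)) : ‖q‖ ^ 2 = ∑ i, q i ^ 2 := by
  rw [EuclideanSpace.norm_eq, Real.sq_sqrt (by positivity)]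
  simp [sq_abs]

lemma pv_coord_abs_le (q : EuclideanSpace ℝ (Fin 4)) (i : Fin 4) : |q i| ≤ ‖q‖ := by
  refine abs_le_of_sq_le_sq ?_ (norm_nonneg q)
  rw [pv_norm_sq]
  exact Finset.single_le_sum (fun j _ => sq_nonneg (q j)) (Finset.mem_univ i)

lemma pv_majorant_integrable :
    Integrable (fun q : EuclideanSpace ℝ (Fin 4) => (1 + ‖q‖ ^ 2)⁻¹ ^ 3) := by
  have h := integrable_rpow_neg_one_add_norm_sq
    (μ := (volume : Measure (EuclideanSpace ℝ (Fin 4)))) (r := 6) (by simp; norm_num)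
  refine h.congr (Filter.Eventually.of_forall fun q => ?_)
  have h1 : (0:ℝ) < 1 + ‖q‖ ^ 2 := by positivity
  have : ((1:ℝ) + ‖q‖ ^ 2) ^ ((-6:ℝ)/2) = (1 + ‖q‖ ^ 2)⁻¹ ^ 3 := by
    rw [show ((-6:ℝ)/2) = -(((3:ℕ)):ℝ) by norm_num, Real.rpow_neg h1.le,
      Real.rpow_natCast, inv_pow]
  exact this

lemma pv_continuous_aux (a : ℝ) (ha : 0 < a) (μ ν : Fin 4) :
    Continuous (fun q : EuclideanSpace ℝ (Fin 4) =>
      q μ * q ν * (1 / (‖q‖ ^ 2 + a) ^ 3 - 1 / (‖q‖ ^ 2 + 1) ^ 3)) := by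
  have hc : ∀ i : Fin 4, Continuous (fun q : EuclideanSpace ℝ (Fin 4) => q i) :=
    fun i => (EuclideanSpace.proj i).continuous
  fun_prop (disch := intro q; positivity)

lemma pv_term_integrable (a : ℝ) (ha : 0 < a) (μ ν : Fin 4) :
    Integrable (fun q : EuclideanSpace ℝ (Fin 4) =>
      q μ * q ν * (1 / (‖q‖ ^ 2 + a) ^ 3 - 1 / (‖q‖ ^ 2 + 1) ^ 3)) := by
  obtain ⟨C, hC0, hC⟩ := pv_diff_bound a ha
  refine ((pv_majorant_integrable.const_mul C).mono'
    (pv_continuous_aux a ha μ ν).aestronglyMeasurable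
    (Filter.Eventually.of_forall fun q => ?_))
  have h1 : (0:ℝ) < 1 + ‖q‖ ^ 2 := by positivity
  have hb := hC (‖q‖ ^ 2) (by positivity)
  calc ‖q μ * q ν * (1 / (‖q‖ ^ 2 + a) ^ 3 - 1 / (‖q‖ ^ 2 + 1) ^ 3)‖
      = |q μ| * |q ν| * |1 / (‖q‖ ^ 2 + a) ^ 3 - 1 / (‖q‖ ^ 2 + 1) ^ 3| := by
        rw [Real.norm_eq_abs, abs_mul, abs_mul]
    _ ≤ ‖q‖ * ‖q‖ * (C / (1 + ‖q‖ ^ 2) ^ 4) := by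
        exact mul_le_mul (mul_le_mul (pv_coord_abs_le q μ) (pv_coord_abs_le q ν)
          (abs_nonneg _) (norm_nonneg _)) hb (abs_nonneg _) (by positivity)
    _ ≤ C * (1 + ‖q‖ ^ 2)⁻¹ ^ 3 := by
        rw [← sq, div_eq_mul_inv, ← inv_pow]
        rw [mul_comm (‖q‖^2), mul_assoc]
        refine mul_le_mul_of_nonneg_left ?_ hC0
        have h2 : ‖q‖ ^ 2 * (1 + ‖q‖ ^ 2)⁻¹ ≤ 1 := by
          rw [mul_inv_le_iff₀ h1]; linarith
        calc (1 + ‖q‖ ^ 2)⁻¹ ^ 4 * ‖q‖ ^ 2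
            = (1 + ‖q‖ ^ 2)⁻¹ ^ 3 * (‖q‖ ^ 2 * (1 + ‖q‖ ^ 2)⁻¹) := by ring
          _ ≤ (1 + ‖q‖ ^ 2)⁻¹ ^ 3 * 1 := mul_le_mul_of_nonneg_left h2 (by positivity)
          _ = (1 + ‖q‖ ^ 2)⁻¹ ^ 3 := mul_one _

lemma pv_radial_term_integrableOn (a : ℝ) (ha : 0 < a) :
    IntegrableOn (fun y : ℝ => y ^ 5 * (1 / (y ^ 2 + a) ^ 3 - 1 / (y ^ 2 + 1) ^ 3)) (Ioi 0) := by
  obtain ⟨C, hC0, hC⟩ := pv_diff_bound a ha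
  have hcont : Continuous (fun y : ℝ => y ^ 5 * (1 / (y ^ 2 + a) ^ 3 - 1 / (y ^ 2 + 1) ^ 3)) := by
    fun_prop (disch := intro y; positivity)
  have h01 : IntegrableOn (fun y : ℝ => y ^ 5 * (1 / (y ^ 2 + a) ^ 3 - 1 / (y ^ 2 + 1) ^ 3))
      (Ioc 0 1) := hcont.integrableOn_Ioc
  have h1i : IntegrableOn (fun y : ℝ => y ^ 5 * (1 / (y ^ 2 + a) ^ 3 - 1 / (y ^ 2 + 1) ^ 3))
      (Ioi 1) := by
    refine (((integrableOn_Ioi_rpow_of_lt (show (-3:ℝ) < -1 by norm_num) one_pos).const_mul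
      C).mono' hcont.aestronglyMeasurable.restrict ?_)
    filter_upwards [ae_restrict_mem measurableSet_Ioi] with y (hy : 1 < y)
    have hy0 : 0 < y := lt_trans one_pos hy
    have hb := hC (y ^ 2) (by positivity)
    have hr : y ^ (-3:ℝ) = (y ^ 3)⁻¹ := by
      rw [show (-3:ℝ) = -((3:ℕ):ℝ) by norm_num, Real.rpow_neg hy0.le, Real.rpow_natCast]
    rw [Real.norm_eq_abs, abs_mul, abs_pow, abs_of_pos hy0, hr]
    calc y ^ 5 * |1 / (y ^ 2 + a) ^ 3 - 1 / (y ^ 2 + 1) ^ 3|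
        ≤ y ^ 5 * (C / (1 + y ^ 2) ^ 4) := by
          exact mul_le_mul_of_nonneg_left hb (by positivity)
      _ ≤ C * (y ^ 3)⁻¹ := by
          rw [div_eq_mul_inv, ← mul_assoc, mul_comm (y ^ 5) C, mul_assoc]
          refine mul_le_mul_of_nonneg_left ?_ hC0
          rw [← div_eq_mul_inv, div_le_iff₀ (by positivity), inv_mul_eq_div,
            le_div_iff₀ (by positivity)]
          have h8 : (y ^ 2) ^ 4 ≤ (1 + y ^ 2) ^ 4 :=
            pow_le_pow_left₀ (by positivity) (by nlinarith : y ^ 2 ≤ 1 + y ^ 2) 4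
          calc y ^ 5 * y ^ 3 = (y ^ 2) ^ 4 := by ring
            _ ≤ (1 + y ^ 2) ^ 4 := h8
  have : Ioi (0:ℝ) = Ioc 0 1 ∪ Ioi 1 := by
    rw [Ioc_union_Ioi_eq_Ioi]; norm_num
  rw [this]
  exact h01.union h1i

lemma pv_radial_integral (n : ℕ) (A M : Fin (n + 1) → ℝ) (hM : ∀ i, 0 < M i)
    (hA : ∑ i, A i = 0) :
    ∫ y in Ioi (0:ℝ), y ^ 3 * (y ^ 2 * ∑ i, A i / (y ^ 2 + M i ^ 2) ^ 3)
      = -(1 / 2) * ∑ i, A i * Real.log (M i ^ 2) := by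
  have hm : ∀ i, (0:ℝ) < M i ^ 2 := fun i => pow_pos (hM i) 2
  set F : ℝ → ℝ := fun y => ∑ i, A i *
    ((1 / 2) * (Real.log (y ^ 2 + M i ^ 2) - Real.log (y ^ 2 + 1))
      + M i ^ 2 * (y ^ 2 + M i ^ 2)⁻¹ - (M i ^ 2 ^ 2 / 4) * ((y ^ 2 + M i ^ 2) ^ 2)⁻¹)
    with hF
  -- the integrand written as a sum of integrable pieces
  have hfun : (fun y : ℝ => y ^ 3 * (y ^ 2 * ∑ i, A i / (y ^ 2 + M i ^ 2) ^ 3)) =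
      fun y => ∑ i, A i * (y ^ 5 * (1 / (y ^ 2 + M i ^ 2) ^ 3 - 1 / (y ^ 2 + 1) ^ 3)) := by
    funext y
    have hy1 : (0:ℝ) < y ^ 2 + 1 := by positivity
    calc y ^ 3 * (y ^ 2 * ∑ i, A i / (y ^ 2 + M i ^ 2) ^ 3)
        = ∑ i, A i * (y ^ 5 / (y ^ 2 + M i ^ 2) ^ 3) := by
          rw [Finset.mul_sum, Finset.mul_sum]
          exact Finset.sum_congr rfl fun i _ => by
            have := (hm i); field_simp
      _ = ∑ i, (A i * (y ^ 5 / (y ^ 2 + M i ^ 2) ^ 3) - A i * (y ^ 5 / (y ^ 2 + 1) ^ 3)) := by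
          rw [Finset.sum_sub_distrib, ← Finset.sum_mul, hA, zero_mul, sub_zero]
      _ = ∑ i, A i * (y ^ 5 * (1 / (y ^ 2 + M i ^ 2) ^ 3 - 1 / (y ^ 2 + 1) ^ 3)) :=
          Finset.sum_congr rfl fun i _ => by ring
  have hint : IntegrableOn
      (fun y : ℝ => y ^ 3 * (y ^ 2 * ∑ i, A i / (y ^ 2 + M i ^ 2) ^ 3)) (Ioi 0) := by
    rw [hfun]
    exact integrable_finset_sum _ fun i _ =>
      (pv_radial_term_integrableOn (M i ^ 2) (hm i)).const_mul (A i)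
  -- derivative
  have hderiv : ∀ y ∈ Ici (0:ℝ), HasDerivAt F
      (y ^ 3 * (y ^ 2 * ∑ i, A i / (y ^ 2 + M i ^ 2) ^ 3)) y := by
    intro y _
    have hId : y ^ 3 * (y ^ 2 * ∑ i, A i / (y ^ 2 + M i ^ 2) ^ 3) =
        ∑ i, A i * (y ^ 5 / (y ^ 2 + M i ^ 2) ^ 3 - y / (y ^ 2 + 1)) := by
      have hy1 : (0:ℝ) < y ^ 2 + 1 := by positivity
      calc y ^ 3 * (y ^ 2 * ∑ i, A i / (y ^ 2 + M i ^ 2) ^ 3)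
          = ∑ i, A i * (y ^ 5 / (y ^ 2 + M i ^ 2) ^ 3) := by
            rw [Finset.mul_sum, Finset.mul_sum]
            exact Finset.sum_congr rfl fun i _ => by
              have := (hm i); field_simp
        _ = ∑ i, (A i * (y ^ 5 / (y ^ 2 + M i ^ 2) ^ 3) - A i * (y / (y ^ 2 + 1))) := by
            rw [Finset.sum_sub_distrib, ← Finset.sum_mul, hA, zero_mul, sub_zero]
        _ = ∑ i, A i * (y ^ 5 / (y ^ 2 + M i ^ 2) ^ 3 - y / (y ^ 2 + 1)) :=
            Finset.sum_congr rfl fun i _ => by ring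
    rw [hId]
    apply HasDerivAt.fun_sum
    intro i _
    have hpos : (0:ℝ) < y ^ 2 + M i ^ 2 := by have := hm i; positivity
    have hpos1 : (0:ℝ) < y ^ 2 + 1 := by positivity
    have hu : HasDerivAt (fun y : ℝ => y ^ 2 + M i ^ 2) (2 * y) y := by
      simpa using (hasDerivAt_pow 2 y).add_const (M i ^ 2)
    have hu1 : HasDerivAt (fun y : ℝ => y ^ 2 + 1) (2 * y) y := by
      simpa using (hasDerivAt_pow 2 y).add_const (1:ℝ)
    have hlog : HasDerivAt (fun y : ℝ => Real.log (y ^ 2 + M i ^ 2))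
        ((2 * y) / (y ^ 2 + M i ^ 2)) y := hu.log hpos.ne'
    have hlog1 : HasDerivAt (fun y : ℝ => Real.log (y ^ 2 + 1))
        ((2 * y) / (y ^ 2 + 1)) y := hu1.log hpos1.ne'
    have hinv : HasDerivAt (fun y : ℝ => (y ^ 2 + M i ^ 2)⁻¹)
        (-(2 * y) / (y ^ 2 + M i ^ 2) ^ 2) y := hu.inv hpos.ne'
    have hsq : HasDerivAt (fun y : ℝ => (y ^ 2 + M i ^ 2) ^ 2)
        (2 * (y ^ 2 + M i ^ 2) ^ 1 * (2 * y)) y := by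
      simpa using hu.fun_pow 2
    have hsqinv : HasDerivAt (fun y : ℝ => ((y ^ 2 + M i ^ 2) ^ 2)⁻¹)
        (-(2 * (y ^ 2 + M i ^ 2) ^ 1 * (2 * y)) / ((y ^ 2 + M i ^ 2) ^ 2) ^ 2) y :=
      hsq.inv (by positivity)
    have h := ((((hlog.sub hlog1).const_mul (1/2 : ℝ)).add
      (hinv.const_mul (M i ^ 2))).sub (hsqinv.const_mul (M i ^ 2 ^ 2 / 4))).const_mul (A i)
    have heq : A i * (1 / 2 * ((2 * y) / (y ^ 2 + M i ^ 2) - (2 * y) / (y ^ 2 + 1)) +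
        M i ^ 2 * (-(2 * y) / (y ^ 2 + M i ^ 2) ^ 2) -
        M i ^ 2 ^ 2 / 4 * (-(2 * (y ^ 2 + M i ^ 2) ^ 1 * (2 * y)) / ((y ^ 2 + M i ^ 2) ^ 2) ^ 2))
        = A i * (y ^ 5 / (y ^ 2 + M i ^ 2) ^ 3 - y / (y ^ 2 + 1)) := by
      have h2 := hm i
      field_simp
      ring
    rw [← heq]
    exact h
  -- limit at infinity
  have htend : Tendsto F atTop (𝓝 0) := by
    have : Tendsto F atTop (𝓝 (∑ i : Fin (n+1), (0:ℝ))) := by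
      apply tendsto_finset_sum
      intro i _
      have htopm : Tendsto (fun y : ℝ => y ^ 2 + M i ^ 2) atTop atTop :=
        tendsto_atTop_add_const_right _ _ (tendsto_pow_atTop two_ne_zero)
      have htop1 : Tendsto (fun y : ℝ => y ^ 2 + 1) atTop atTop :=
        tendsto_atTop_add_const_right _ _ (tendsto_pow_atTop two_ne_zero)
      have h2 : Tendsto (fun y : ℝ => M i ^ 2 * (y ^ 2 + M i ^ 2)⁻¹) atTop (𝓝 0) := by
        simpa using (htopm.inv_tendsto_atTop).const_mul (M i ^ 2)
      have h3 : Tendsto (fun y : ℝ => (M i ^ 2 ^ 2 / 4) * ((y ^ 2 + M i ^ 2) ^ 2)⁻¹)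
          atTop (𝓝 0) := by
        have hsqtop : Tendsto (fun y : ℝ => (y ^ 2 + M i ^ 2) ^ 2) atTop atTop := by
          have := htopm.atTop_mul_atTop₀ htopm
          simpa [sq] using this
        have h3' := (hsqtop.inv_tendsto_atTop).const_mul (M i ^ 2 ^ 2 / 4)
        rwa [mul_zero] at h3'
      have h1 : Tendsto (fun y : ℝ => Real.log (y ^ 2 + M i ^ 2) - Real.log (y ^ 2 + 1))
          atTop (𝓝 0) := by
        have hquot : Tendsto (fun y : ℝ => (y ^ 2 + M i ^ 2) / (y ^ 2 + 1)) atTop (𝓝 1) := by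
          have heq2 : (fun y : ℝ => (y ^ 2 + M i ^ 2) / (y ^ 2 + 1)) =
              fun y => 1 + (M i ^ 2 - 1) * (y ^ 2 + 1)⁻¹ := by
            funext y
            have hy1 : (0:ℝ) < y ^ 2 + 1 := by positivity
            field_simp
            ring
          rw [heq2]
          have := (htop1.inv_tendsto_atTop).const_mul (M i ^ 2 - 1)
          simpa using (tendsto_const_nhds (x := (1:ℝ))).add this
        have hcomp := ((Real.continuousAt_log one_ne_zero).tendsto).comp hquot
        rw [Real.log_one] at hcomp
        apply hcomp.congr
        intro y
        have hy1 : (0:ℝ) < y ^ 2 + 1 := by positivity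
        have hym : (0:ℝ) < y ^ 2 + M i ^ 2 := by have := hm i; positivity
        simp [Function.comp, Real.log_div hym.ne' hy1.ne']
      have := (((h1.const_mul (1/2 : ℝ)).add h2).sub h3).const_mul (A i)
      simpa using this
    simpa using this
  have hFzero : F 0 = (1 / 2) * ∑ i, A i * Real.log (M i ^ 2) := by
    have : F 0 = ∑ i, (A i * ((1 / 2) * Real.log (M i ^ 2)) + A i * (3 / 4)) := by
      rw [hF]
      exact Finset.sum_congr rfl fun i _ => by
        have h2 := (hm i).ne'
        have h3 := (hM i).ne'
        rw [show (0:ℝ) ^ 2 + M i ^ 2 = M i ^ 2 by ring, show (0:ℝ) ^ 2 + 1 = 1 by ring,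
          Real.log_one]
        field_simp
        ring
    rw [this, Finset.sum_add_distrib, ← Finset.sum_mul, hA, zero_mul, add_zero,
      Finset.mul_sum]
    exact Finset.sum_congr rfl fun i _ => by ring
  have := integral_Ioi_of_hasDerivAt_of_tendsto' hderiv hint htend
  rw [this, hFzero]
  ring
/-- Identity (int-q9): `∫_{ℝ⁴} q_μ q_ν ∑ᵢ Aᵢ/(‖q‖²+Mᵢ²)³ dq
  = -(π²/4) δ_{μν} ∑ᵢ Aᵢ log Mᵢ²`. -/
theorem integral_pauliVillars_cube_two_coords (n : ℕ) (A M : Fin (n + 1) → ℝ)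
    (hM : ∀ i, 0 < M i) (hA : ∑ i, A i = 0) (μ ν : Fin 4) :
    Integrable (fun q : EuclideanSpace ℝ (Fin 4) =>
      q μ * q ν * ∑ i, A i / (‖q‖ ^ 2 + M i ^ 2) ^ 3) ∧
    ∫ q : EuclideanSpace ℝ (Fin 4),
        q μ * q ν * ∑ i, A i / (‖q‖ ^ 2 + M i ^ 2) ^ 3 =
      -(π ^ 2 / 4) * (if μ = ν then (1 : ℝ) else 0) *
        ∑ i, A i * Real.log (M i ^ 2) := by
  have hm : ∀ i, (0:ℝ) < M i ^ 2 := fun i => pow_pos (hM i) 2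
  -- split the integrand into integrable pieces
  have hsplit : ∀ (κ κ' : Fin 4) (q : EuclideanSpace ℝ (Fin 4)),
      q κ * q κ' * ∑ i, A i / (‖q‖ ^ 2 + M i ^ 2) ^ 3 =
        ∑ i, A i * (q κ * q κ' * (1 / (‖q‖ ^ 2 + M i ^ 2) ^ 3 - 1 / (‖q‖ ^ 2 + 1) ^ 3)) := by
    intro κ κ' q
    have hz : ∑ i, A i * (q κ * q κ' * (1 / (‖q‖ ^ 2 + 1) ^ 3)) = 0 := by
      rw [← Finset.sum_mul, hA, zero_mul]
    calc q κ * q κ' * ∑ i, A i / (‖q‖ ^ 2 + M i ^ 2) ^ 3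
        = ∑ i, A i * (q κ * q κ' * (1 / (‖q‖ ^ 2 + M i ^ 2) ^ 3)) := by
          rw [Finset.mul_sum]
          exact Finset.sum_congr rfl fun i _ => by ring
      _ = ∑ i, A i * (q κ * q κ' * (1 / (‖q‖ ^ 2 + M i ^ 2) ^ 3))
            - ∑ i, A i * (q κ * q κ' * (1 / (‖q‖ ^ 2 + 1) ^ 3)) := by rw [hz, sub_zero]
      _ = ∑ i, A i * (q κ * q κ' * (1 / (‖q‖ ^ 2 + M i ^ 2) ^ 3 - 1 / (‖q‖ ^ 2 + 1) ^ 3)) := by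
          rw [← Finset.sum_sub_distrib]
          exact Finset.sum_congr rfl fun i _ => by ring
  have hIntE : ∀ κ κ' : Fin 4, Integrable (fun q : EuclideanSpace ℝ (Fin 4) =>
      q κ * q κ' * ∑ i, A i / (‖q‖ ^ 2 + M i ^ 2) ^ 3) := by
    intro κ κ'
    have heqf : (fun q : EuclideanSpace ℝ (Fin 4) =>
        q κ * q κ' * ∑ i, A i / (‖q‖ ^ 2 + M i ^ 2) ^ 3) =
        fun q => ∑ i, A i * (q κ * q κ' *
          (1 / (‖q‖ ^ 2 + M i ^ 2) ^ 3 - 1 / (‖q‖ ^ 2 + 1) ^ 3)) := funext (hsplit κ κ')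
    rw [heqf]
    exact integrable_finset_sum _ fun i _ =>
      (pv_term_integrable (M i ^ 2) (hm i) κ κ').const_mul (A i)
  refine ⟨hIntE μ ν, ?_⟩
  -- transfer to the product space
  have hvol := EuclideanSpace.volume_preserving_symm_measurableEquiv_toLp (Fin 4)
  have hecoord : ∀ (q : EuclideanSpace ℝ (Fin 4)) (j : Fin 4),
      (MeasurableEquiv.toLp 2 (Fin 4 → ℝ)).symm q j = q j := fun q j => rfl
  have htrans : ∀ κ κ' : Fin 4,
      (∫ x : Fin 4 → ℝ, x κ * x κ' * ∑ i, A i / ((∑ j, x j ^ 2) + M i ^ 2) ^ 3)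
        = ∫ q : EuclideanSpace ℝ (Fin 4), q κ * q κ' * ∑ i, A i / (‖q‖ ^ 2 + M i ^ 2) ^ 3 := by
    intro κ κ'
    rw [← hvol.integral_comp' (fun x : Fin 4 → ℝ =>
      x κ * x κ' * ∑ i, A i / ((∑ j, x j ^ 2) + M i ^ 2) ^ 3)]
    congr 1
    funext q
    simp only [hecoord]
    rw [pv_norm_sq]
  have hIntPi : ∀ κ κ' : Fin 4, Integrable (fun x : Fin 4 → ℝ =>
      x κ * x κ' * ∑ i, A i / ((∑ j, x j ^ 2) + M i ^ 2) ^ 3) := by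
    intro κ κ'
    rw [← hvol.integrable_comp_emb (MeasurableEquiv.measurableEmbedding _)]
    have heqf : (fun x : Fin 4 → ℝ =>
        x κ * x κ' * ∑ i, A i / ((∑ j, x j ^ 2) + M i ^ 2) ^ 3) ∘
          (MeasurableEquiv.toLp 2 (Fin 4 → ℝ)).symm =
        fun q : EuclideanSpace ℝ (Fin 4) =>
          q κ * q κ' * ∑ i, A i / (‖q‖ ^ 2 + M i ^ 2) ^ 3 := by
      funext q
      simp only [Function.comp_apply, hecoord]
      rw [pv_norm_sq]
    rw [heqf]
    exact hIntE κ κ'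
  by_cases hμν : μ = ν
  · -- diagonal case
    subst hμν
    rw [if_pos rfl, mul_one]
    rw [← htrans μ μ]
    -- all diagonal integrals are equal
    have hswap : ∀ κ : Fin 4,
        (∫ x : Fin 4 → ℝ, x κ * x κ * ∑ i, A i / ((∑ j, x j ^ 2) + M i ^ 2) ^ 3)
          = ∫ x : Fin 4 → ℝ, x μ * x μ * ∑ i, A i / ((∑ j, x j ^ 2) + M i ^ 2) ^ 3 := by
      intro κ
      have hvp := volume_measurePreserving_piCongrLeft (fun _ : Fin 4 => ℝ) (Equiv.swap μ κ)
      rw [← hvp.integral_comp' (fun x : Fin 4 → ℝ =>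
        x κ * x κ * ∑ i, A i / ((∑ j, x j ^ 2) + M i ^ 2) ^ 3)]
      congr 1
      funext x
      have hap : ∀ b : Fin 4,
          (MeasurableEquiv.piCongrLeft (fun _ : Fin 4 => ℝ) (Equiv.swap μ κ)) x b =
            x ((Equiv.swap μ κ).symm b) := by
        intro b
        conv_lhs => rw [show b = (Equiv.swap μ κ) ((Equiv.swap μ κ).symm b) by simp]
        rw [MeasurableEquiv.piCongrLeft_apply_apply]
      simp only [hap]
      have h1 : (Equiv.swap μ κ).symm κ = μ := by
        rw [Equiv.symm_swap, Equiv.swap_apply_right]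
      have h2 : ∑ j, x ((Equiv.swap μ κ).symm j) ^ 2 = ∑ j, x j ^ 2 :=
        Equiv.sum_comp (Equiv.swap μ κ).symm (fun j => x j ^ 2)
      rw [h1, h2]
    have h4I : (4:ℝ) * (∫ x : Fin 4 → ℝ, x μ * x μ * ∑ i, A i / ((∑ j, x j ^ 2) + M i ^ 2) ^ 3)
        = ∫ x : Fin 4 → ℝ, (∑ κ, x κ * x κ) * ∑ i, A i / ((∑ j, x j ^ 2) + M i ^ 2) ^ 3 := by
      calc (4:ℝ) * (∫ x : Fin 4 → ℝ, x μ * x μ * ∑ i, A i / ((∑ j, x j ^ 2) + M i ^ 2) ^ 3)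
          = ∑ _κ : Fin 4, ∫ x : Fin 4 → ℝ,
              x μ * x μ * ∑ i, A i / ((∑ j, x j ^ 2) + M i ^ 2) ^ 3 := by
            rw [Finset.sum_const]
            simp only [Finset.card_univ, Fintype.card_fin, nsmul_eq_mul]
            norm_num
        _ = ∑ κ : Fin 4, ∫ x : Fin 4 → ℝ,
              x κ * x κ * ∑ i, A i / ((∑ j, x j ^ 2) + M i ^ 2) ^ 3 :=
            (Finset.sum_congr rfl fun κ _ => (hswap κ).symm)
        _ = ∫ x : Fin 4 → ℝ, ∑ κ, (x κ * x κ * ∑ i, A i / ((∑ j, x j ^ 2) + M i ^ 2) ^ 3) :=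
            (integral_finset_sum _ fun κ _ => hIntPi κ κ).symm
        _ = ∫ x : Fin 4 → ℝ, (∑ κ, x κ * x κ) * ∑ i, A i / ((∑ j, x j ^ 2) + M i ^ 2) ^ 3 := by
            congr 1
            funext x
            rw [Finset.sum_mul]
    -- compute the radial integral
    have hradial : (∫ x : Fin 4 → ℝ, (∑ κ, x κ * x κ) *
        ∑ i, A i / ((∑ j, x j ^ 2) + M i ^ 2) ^ 3)
        = -(π ^ 2) * ∑ i, A i * Real.log (M i ^ 2) := by
      rw [← hvol.integral_comp' (fun x : Fin 4 → ℝ =>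
        (∑ κ, x κ * x κ) * ∑ i, A i / ((∑ j, x j ^ 2) + M i ^ 2) ^ 3)]
      have heqf : (fun q : EuclideanSpace ℝ (Fin 4) =>
          (∑ κ, (MeasurableEquiv.toLp 2 (Fin 4 → ℝ)).symm q κ *
            (MeasurableEquiv.toLp 2 (Fin 4 → ℝ)).symm q κ) *
          ∑ i, A i / ((∑ j, ((MeasurableEquiv.toLp 2 (Fin 4 → ℝ)).symm q j) ^ 2) + M i ^ 2) ^ 3)
          = fun q : EuclideanSpace ℝ (Fin 4) =>
            (fun y : ℝ => y ^ 2 * ∑ i, A i / (y ^ 2 + M i ^ 2) ^ 3) ‖q‖ := by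
        funext q
        simp only [hecoord]
        have h1 : ∑ κ, q κ * q κ = ‖q‖ ^ 2 := by
          rw [pv_norm_sq]
          exact Finset.sum_congr rfl fun κ _ => (sq (q κ)).symm ▸ (pow_two (q κ)).symm
        rw [h1, pv_norm_sq]
      rw [heqf, MeasureTheory.integral_fun_norm_addHaar (volume : Measure (EuclideanSpace ℝ (Fin 4)))
        (fun y : ℝ => y ^ 2 * ∑ i, A i / (y ^ 2 + M i ^ 2) ^ 3)]
      have hrank : Module.finrank ℝ (EuclideanSpace ℝ (Fin 4)) = 4 := finrank_euclideanSpace_fin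
      rw [hrank]
      have hball : (volume (Metric.ball (0 : EuclideanSpace ℝ (Fin 4)) 1)).toReal = π ^ 2 / 2 := by
        rw [EuclideanSpace.volume_ball]
        simp only [Fintype.card_fin]
        rw [ENNReal.ofReal_one, one_pow, one_mul, ENNReal.toReal_ofReal (by positivity)]
        rw [show Real.sqrt π ^ 4 = (Real.sqrt π ^ 2) ^ 2 by ring, Real.sq_sqrt pi_pos.le]
        norm_num
      rw [measureReal_def, hball]
      have h3 : (4 - 1 : ℕ) = 3 := by norm_num
      rw [h3]
      simp only [smul_eq_mul]
      rw [pv_radial_integral n A M hM hA]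
      ring
    have hI := htrans μ μ
    linarith [h4I, hradial]
  · -- off-diagonal case: the integral vanishes by symmetry
    rw [if_neg hμν, mul_zero, zero_mul]
    rw [← htrans μ ν]
    set Teq : (Fin 4 → ℝ) ≃ᵐ (Fin 4 → ℝ) :=
      MeasurableEquiv.piCongrRight (fun i => if i = μ then MeasurableEquiv.neg ℝ
        else MeasurableEquiv.refl ℝ) with hTeq
    have hTcoe : ∀ (x : Fin 4 → ℝ) (j : Fin 4), Teq x j = if j = μ then -(x j) else x j := by
      intro x j
      by_cases h : j = μ <;> simp [hTeq, MeasurableEquiv.piCongrRight, Equiv.piCongrRight, h]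
    have hTpres : MeasurePreserving Teq volume volume := by
      have hpi := MeasureTheory.volume_preserving_pi
        (f := fun (j : Fin 4) (t : ℝ) => if j = μ then -t else t) (fun j => by
          by_cases h : j = μ
          · simpa [h] using Measure.measurePreserving_neg (volume : Measure ℝ)
          · simp only [h, if_false]; exact MeasurePreserving.id (volume : Measure ℝ))
      have hcoe : ⇑Teq = fun (a : Fin 4 → ℝ) (j : Fin 4) =>
          (fun (j : Fin 4) (t : ℝ) => if j = μ then -t else t) j (a j) := by
        funext x j
        simp only [hTcoe]
      rw [hcoe]
      exact hpi
    have hcomp := hTpres.integral_comp' (fun x : Fin 4 → ℝ =>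
      x μ * x ν * ∑ i, A i / ((∑ j, x j ^ 2) + M i ^ 2) ^ 3)
    have hneg : (fun x : Fin 4 → ℝ =>
        Teq x μ * Teq x ν * ∑ i, A i / ((∑ j, (Teq x j) ^ 2) + M i ^ 2) ^ 3)
        = fun x : Fin 4 → ℝ =>
          -(x μ * x ν * ∑ i, A i / ((∑ j, x j ^ 2) + M i ^ 2) ^ 3) := by
      funext x
      have h1 : Teq x μ = -(x μ) := by rw [hTcoe, if_pos rfl]
      have h2 : Teq x ν = x ν := by rw [hTcoe, if_neg (Ne.symm hμν)]
      have h3 : ∑ j, (Teq x j) ^ 2 = ∑ j, x j ^ 2 := by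
        refine Finset.sum_congr rfl fun j _ => ?_
        rw [hTcoe]
        by_cases h : j = μ <;> simp [h]
      rw [h1, h2, h3]
      ring
    rw [hneg] at hcomp
    rw [integral_neg] at hcomp
    linarith [hcomp]
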